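/- arXiv:2201.02308 — 4 statements merged into one kernel-verified Lean document; each statement's English description precedes it below -/
import Mathlib

section
/- In the monoid M = ⟨x_0, x_1, x_2, ... | x_j x_i = x_i x_{j+1} for 0 ≤ i < j⟩, every element can be written in the normal form x_{i_1} x_{i_2} ... x_{i_k} with k ≥ 0 and i_1 ≤ i_2 ≤ ... ≤ i_k. -/
/-- The defining relation of Thompson's monoid: `x_j x_i = x_i x_{j+1}` for `i < j`. -/
def thompsonRel : FreeMonoid ℕ → FreeMonoid ℕ → Prop := fun a b =>
  ∃ i j : ℕ, i < j ∧ a = FreeMonoid.of j * FreeMonoid.of i ∧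
    b = FreeMonoid.of i * FreeMonoid.of (j + 1)

/-- The congruence on the free monoid generated by the Thompson relations. -/
def thompsonCon : Con (FreeMonoid ℕ) := conGen thompsonRel

/-- Thompson's monoid `M`. -/
abbrev ThompsonM := thompsonCon.Quotient

/-- The generators `x_n` of Thompson's monoid. -/
def xM (n : ℕ) : ThompsonM := thompsonCon.mk' (FreeMonoid.of n)

/-- The shift endomorphism `φ : M → M`, `x_i ↦ x_{i+1}`. -/
def shiftM : ThompsonM →* ThompsonM :=
  Con.lift _ ((Con.mk' thompsonCon).comp (FreeMonoid.map Nat.succ)) (by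
    apply Con.conGen_le.2
    rintro a b ⟨i, j, hij, rfl, rfl⟩
    simp only [Con.ker_rel, MonoidHom.comp_apply, map_mul, FreeMonoid.map_of]
    exact Con.eq _ |>.2 (ConGen.Rel.of _ _ ⟨i + 1, j + 1, by omega, rfl, rfl⟩))

/-- The relators of Thompson's group `F` (infinite presentation). -/
def thompsonRels : Set (FreeGroup ℕ) :=
  {w | ∃ i j : ℕ, i < j ∧
    w = FreeGroup.of j * FreeGroup.of i * (FreeGroup.of i * FreeGroup.of (j + 1))⁻¹}

/-- Thompson's group `F`. -/
abbrev ThompsonF := PresentedGroup thompsonRels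

/-- The generators `x_n` of Thompson's group. -/
def xF (n : ℕ) : ThompsonF := PresentedGroup.of n

/-- Word length, as a monoid homomorphism on the free monoid. -/
def lenHom : FreeMonoid ℕ →* Multiplicative ℕ where
  toFun w := Multiplicative.ofAdd w.length
  map_one' := by simp
  map_mul' a b := by
    simp [FreeMonoid.length_mul, ofAdd_add]

/-- Length is well defined on Thompson's monoid. -/
def lenM : ThompsonM →* Multiplicative ℕ :=
  Con.lift _ lenHom (by
    apply Con.conGen_le.2
    rintro a b ⟨i, j, hij, rfl, rfl⟩
    simp [Con.ker_rel, lenHom, FreeMonoid.length_mul]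
    rfl)

/-- The length of an element of Thompson's monoid. -/
def mlen (g : ThompsonM) : ℕ := Multiplicative.toAdd (lenM g)

/-- The degree of an element of the monoid ring `K[M]`. -/
noncomputable def mdeg {K : Type*} [Field K] (a : MonoidAlgebra K ThompsonM) : ℕ :=
  a.coeff.support.sup mlen

/-- The submonoid `M_i` of `M` generated by `x_i, x_{i+1}, …`. -/
def Msub (i : ℕ) : Submonoid ThompsonM :=
  Submonoid.closure {g | ∃ n : ℕ, i ≤ n ∧ g = xM n}

/-- The shift endomorphism of the monoid ring `K[M]` induced by `φ`. -/
noncomputable def shiftA (K : Type*) [Field K] :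
    MonoidAlgebra K ThompsonM →+* MonoidAlgebra K ThompsonM :=
  MonoidAlgebra.mapDomainRingHom K shiftM

/-- The natural homomorphism of Thompson's monoid into Thompson's group. -/
def iotaMF : ThompsonM →* ThompsonF :=
  Con.lift _ (FreeMonoid.lift xF) (by
    apply Con.conGen_le.2
    rintro a b ⟨i, j, hij, rfl, rfl⟩
    simp only [Con.ker_rel, map_mul, FreeMonoid.lift_eval_of]
    have h : (FreeGroup.of j * FreeGroup.of i *
        (FreeGroup.of i * FreeGroup.of (j + 1))⁻¹ : FreeGroup ℕ) ∈ thompsonRels :=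
      ⟨i, j, hij, rfl⟩
    have h1 : PresentedGroup.mk thompsonRels
        (FreeGroup.of j * FreeGroup.of i * (FreeGroup.of i * FreeGroup.of (j + 1))⁻¹) = 1 := by
      exact (QuotientGroup.eq_one_iff _).2 (Subgroup.subset_normalClosure h)
    have := h1
    rw [map_mul, map_mul, map_inv, map_mul, mul_inv_eq_one] at this
    simpa [xF, PresentedGroup.of] using this)

/-- The generator `x_n` as an element of the group ring `K[F]`. -/
noncomputable def XF (K : Type*) [Field K] (n : ℕ) : MonoidAlgebra K ThompsonF :=
  MonoidAlgebra.of K ThompsonF (xF n)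

/-- The generator `x_n` as an element of the monoid ring `K[M]`. -/
noncomputable def XMa (K : Type*) [Field K] (n : ℕ) : MonoidAlgebra K ThompsonM :=
  MonoidAlgebra.of K ThompsonM (xM n)

def tins : ℕ → List ℕ → List ℕ
  | n, [] => [n]
  | n, i :: rest => if n ≤ i then n :: i :: rest else i :: tins (n+1) rest

lemma tins_mem : ∀ (l : List ℕ) (n m : ℕ), m ∈ tins n l → n ≤ m ∨ m ∈ l := by
  intro l
  induction l with
  | nil => intro n m h; simp [tins] at h; omega
  | cons i rest ih =>
    intro n m h
    by_cases hni : n ≤ i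
    · simp [tins, hni] at h
      rcases h with rfl | h
      · left; rfl
      · right; simpa using h
    · simp [tins, hni] at h
      rcases h with rfl | h
      · right; simp
      · rcases ih (n+1) m h with h1 | h1
        · left; omega
        · right; simp [h1]

lemma tins_sorted : ∀ (l : List ℕ) (n : ℕ), l.Pairwise (· ≤ ·) → (tins n l).Pairwise (· ≤ ·) := by
  intro l
  induction l with
  | nil => intro n _; simp [tins]
  | cons i rest ih =>
    intro n hs
    rw [List.pairwise_cons] at hs
    by_cases hni : n ≤ i
    · simp only [tins, if_pos hni, List.pairwise_cons]
      constructor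
      · intro b hb
        rcases List.mem_cons.1 hb with rfl | hb
        · exact hni
        · exact le_trans hni (hs.1 b hb)
      · exact hs
    · simp only [tins, if_neg hni, List.pairwise_cons]
      refine ⟨?_, ih (n+1) hs.2⟩
      intro b hb
      rcases tins_mem rest (n+1) b hb with h1 | h1
      · omega
      · exact hs.1 b h1

lemma tins_rel : ∀ (l : List ℕ) (n : ℕ),
    thompsonCon (FreeMonoid.ofList (n :: l)) (FreeMonoid.ofList (tins n l)) := by
  intro l
  induction l with
  | nil => intro n; exact thompsonCon.refl _
  | cons i rest ih =>
    intro n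
    by_cases hni : n ≤ i
    · simp only [tins, if_pos hni]
      exact thompsonCon.refl _
    · simp only [tins, if_neg hni]
      have h1 : thompsonCon (FreeMonoid.ofList (n :: i :: rest))
          (FreeMonoid.ofList (i :: (n+1) :: rest)) := by
        have hrel : thompsonCon (FreeMonoid.of n * FreeMonoid.of i)
            (FreeMonoid.of i * FreeMonoid.of (n+1)) :=
          ConGen.Rel.of _ _ ⟨i, n, by omega, rfl, rfl⟩
        have : FreeMonoid.ofList (n :: i :: rest)
            = (FreeMonoid.of n * FreeMonoid.of i) * FreeMonoid.ofList rest := rfl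
        rw [this]
        have h2 : FreeMonoid.ofList (i :: (n+1) :: rest)
            = (FreeMonoid.of i * FreeMonoid.of (n+1)) * FreeMonoid.ofList rest := rfl
        rw [h2]
        exact thompsonCon.mul hrel (thompsonCon.refl _)
      refine h1.trans ?_
      have h3 : FreeMonoid.ofList (i :: (n+1) :: rest)
          = FreeMonoid.of i * FreeMonoid.ofList ((n+1) :: rest) := rfl
      have h4 : FreeMonoid.ofList (i :: tins (n+1) rest)
          = FreeMonoid.of i * FreeMonoid.ofList (tins (n+1) rest) := rfl
      rw [h3, h4]
      exact thompsonCon.mul (thompsonCon.refl _) (ih (n+1))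

/-- every element of Thompson's monoid has a normal form
`x_{i_1} ⋯ x_{i_k}` with `i_1 ≤ ⋯ ≤ i_k`. -/
theorem stmt1 (g : ThompsonM) :
    ∃ l : List ℕ, l.Pairwise (· ≤ ·) ∧ g = thompsonCon.mk' (FreeMonoid.ofList l) := by
  obtain ⟨w, rfl⟩ := Con.mk'_surjective g
  have key : ∀ l : List ℕ, ∃ l' : List ℕ, l'.Pairwise (· ≤ ·) ∧
      thompsonCon (FreeMonoid.ofList l) (FreeMonoid.ofList l') := by
    intro l
    induction l with
    | nil => exact ⟨[], by simp, thompsonCon.refl _⟩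
    | cons n rest ih =>
      obtain ⟨l', hs, hrel⟩ := ih
      refine ⟨tins n l', tins_sorted l' n hs, ?_⟩
      have h1 : thompsonCon (FreeMonoid.ofList (n :: rest)) (FreeMonoid.ofList (n :: l')) := by
        have : FreeMonoid.ofList (n :: rest) = FreeMonoid.of n * FreeMonoid.ofList rest := rfl
        rw [this, show FreeMonoid.ofList (n :: l') = FreeMonoid.of n * FreeMonoid.ofList l' from rfl]
        exact thompsonCon.mul (thompsonCon.refl _) hrel
      exact h1.trans (tins_rel l' n)
  obtain ⟨l', hs, hrel⟩ := key (FreeMonoid.toList w)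
  refine ⟨l', hs, ?_⟩
  have : w = FreeMonoid.ofList (FreeMonoid.toList w) := rfl
  rw [this] at hrel ⊢
  exact (Con.eq _).2 hrel
end

section
/- For any nonzero element b of the monoid ring K[M] of Thompson's monoid over a field K, the set B = {b, φ(b), φ^2(b), ...} is not a free basis of the right K[M]-module it generates; that is, there exist m ≥ 0 and elements u_0, ..., u_m ∈ K[M], not all zero, such that b·u_0 + φ(b)·u_1 + ... + φ^m(b)·u_m = 0. -/
def fAct (k : ℕ) : List ℕ → List ℕ
  | [] => [k]
  | a :: t => if a ≤ k then a :: fAct k t else k :: ((a :: t).map (· + 1))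

lemma fAct_map_succ (k : ℕ) (l : List ℕ) :
    (fAct k l).map (· + 1) = fAct (k + 1) (l.map (· + 1)) := by
  induction l with
  | nil => simp [fAct]
  | cons a t ih =>
    by_cases h : a ≤ k
    · simp [fAct, h, ih]
    · simp [fAct, h, List.map_map]
      try rfl

lemma fAct_braid {i j : ℕ} (h : i < j) (l : List ℕ) :
    fAct i (fAct j l) = fAct (j + 1) (fAct i l) := by
  induction l with
  | nil =>
    simp [fAct, Nat.not_le.2 h, Nat.le_of_lt (Nat.lt_succ_of_lt h)]
  | cons a t ih =>
    rcases le_or_gt a i with hai | hai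
    · have haj : a ≤ j := hai.trans h.le
      have haj1 : a ≤ j + 1 := by omega
      simp [fAct, hai, haj, haj1, ih]
    · rcases le_or_gt a j with haj | haj
      · have h1 : ¬ a ≤ i := Nat.not_le.2 hai
        have h4 : i ≤ j + 1 := by omega
        simp [fAct, haj, h1, Nat.not_le.2 h, Nat.succ_le_succ haj, fAct_map_succ, h4]
      · have h1 : ¬ a ≤ i := Nat.not_le.2 hai
        have h2 : ¬ a ≤ j := Nat.not_le.2 haj
        have h3 : ¬ a + 1 ≤ j + 1 := by omega
        have h4 : i ≤ j + 1 := by omega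
        simp [fAct, h1, h2, h3, h4, Nat.not_le.2 h, List.map_map]

lemma mem_fAct {x k : ℕ} {l : List ℕ} (hx : x ∈ fAct k l) :
    x = k ∨ ∃ y ∈ l, x = y ∨ x = y + 1 := by
  induction l with
  | nil => simp [fAct] at hx; exact Or.inl hx
  | cons a t ih =>
    by_cases h : a ≤ k
    · simp only [fAct, if_pos h, List.mem_cons] at hx
      rcases hx with rfl | hx
      · exact Or.inr ⟨x, List.mem_cons_self, Or.inl rfl⟩
      · rcases ih hx with h1 | ⟨y, hy, h2⟩
        · exact Or.inl h1
        · exact Or.inr ⟨y, List.mem_cons_of_mem _ hy, h2⟩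
    · simp only [fAct, if_neg h, List.mem_cons, List.mem_map] at hx
      rcases hx with rfl | ⟨y, hy, rfl⟩
      · exact Or.inl rfl
      · exact Or.inr ⟨y, List.mem_cons.2 hy, Or.inr rfl⟩

lemma fAct_sorted {l : List ℕ} (hl : l.Pairwise (· ≤ ·)) (k : ℕ) :
    (fAct k l).Pairwise (· ≤ ·) := by
  induction l with
  | nil => simp [fAct]
  | cons a t ih =>
    rw [List.pairwise_cons] at hl
    by_cases h : a ≤ k
    · rw [fAct, if_pos h, List.pairwise_cons]
      refine ⟨fun b hb => ?_, ih hl.2⟩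
      rcases mem_fAct hb with rfl | ⟨y, hy, h2⟩
      · exact h
      · have := hl.1 y hy
        omega
    · rw [fAct, if_neg h, List.pairwise_cons]
      constructor
      · intro b hb
        simp only [List.mem_map, List.mem_cons] at hb
        obtain ⟨y, hy, rfl⟩ := hb
        rcases hy with rfl | hy
        · omega
        · have := hl.1 y hy; omega
      · have hs : (a :: t).Pairwise (· ≤ ·) := List.pairwise_cons.2 hl
        exact List.Pairwise.map _ (fun hxy => by omega) hs

lemma fAct_of_le {l : List ℕ} {k : ℕ} (h : ∀ y ∈ l, y ≤ k) :
    fAct k l = l ++ [k] := by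
  induction l with
  | nil => rfl
  | cons a t ih =>
    rw [fAct, if_pos (h a (List.mem_cons_self)), ih fun y hy => h y (List.mem_cons_of_mem _ hy)]
    rfl

def pil (l : List ℕ) : ThompsonM := thompsonCon.mk' (FreeMonoid.ofList l)

lemma pil_nil : pil [] = 1 := rfl

lemma pil_cons (a : ℕ) (l : List ℕ) : pil (a :: l) = xM a * pil l := by
  unfold pil xM
  rw [← map_mul]
  rfl

lemma pil_singleton (a : ℕ) : pil [a] = xM a := by
  rw [pil_cons, pil_nil, mul_one]

lemma pil_append (l l' : List ℕ) : pil (l ++ l') = pil l * pil l' := by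
  unfold pil
  rw [← map_mul]
  rfl

lemma xM_rel {i j : ℕ} (h : i < j) : xM j * xM i = xM i * xM (j + 1) := by
  unfold xM
  rw [← map_mul, ← map_mul]
  exact Con.eq _ |>.2 (ConGen.Rel.of _ _ ⟨i, j, h, rfl, rfl⟩)

def actFree : FreeMonoid ℕ →* (Function.End (List ℕ))ᵐᵒᵖ :=
  FreeMonoid.lift fun k => MulOpposite.op (fAct k : Function.End (List ℕ))

def actM : ThompsonM →* (Function.End (List ℕ))ᵐᵒᵖ :=
  Con.lift _ actFree (by
    apply Con.conGen_le.2
    rintro a b ⟨i, j, hij, rfl, rfl⟩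
    simp only [Con.ker_rel, map_mul, actFree, FreeMonoid.lift_eval_of]
    apply MulOpposite.unop_injective
    funext l
    show fAct i (fAct j l) = fAct (j + 1) (fAct i l)
    exact fAct_braid hij l)

def nf (g : ThompsonM) : List ℕ := (actM g).unop []

lemma actM_mk (w : FreeMonoid ℕ) : actM (thompsonCon.mk' w) = actFree w :=
  Con.lift_mk' _ w

lemma nf_one : nf 1 = [] := by
  simp only [nf, map_one]
  rfl

lemma nf_mul_xM (g : ThompsonM) (k : ℕ) : nf (g * xM k) = fAct k (nf g) := by
  unfold nf
  rw [map_mul]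
  have h1 : actM (xM k) = MulOpposite.op (fAct k : Function.End (List ℕ)) := by
    unfold xM
    rw [actM_mk]
    exact FreeMonoid.lift_eval_of _ _
  rw [h1]
  rfl

lemma exists_pil (g : ThompsonM) : ∃ l : List ℕ, g = pil l := by
  obtain ⟨w, rfl⟩ := Con.mk'_surjective (c := thompsonCon) g
  exact ⟨FreeMonoid.toList w, by unfold pil; rw [FreeMonoid.ofList_toList]⟩

lemma pil_shift {k : ℕ} : ∀ {l : List ℕ}, (∀ y ∈ l, k < y) →
    pil l * xM k = xM k * pil (l.map (· + 1))
  | [], _ => by rw [pil_nil, one_mul, List.map_nil, pil_nil, mul_one]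
  | a :: t, h => by
    have h1 : k < a := h a (List.mem_cons_self)
    have h2 := pil_shift (fun y hy => h y (List.mem_cons_of_mem _ hy))
    rw [pil_cons, List.map_cons, pil_cons, mul_assoc, h2, ← mul_assoc, xM_rel h1, mul_assoc]

lemma pil_fAct {l : List ℕ} (hl : l.Pairwise (· ≤ ·)) (k : ℕ) :
    pil (fAct k l) = pil l * xM k := by
  induction l with
  | nil => rw [pil_nil, one_mul]; exact pil_singleton k
  | cons a t ih =>
    rw [List.pairwise_cons] at hl
    by_cases h : a ≤ k
    · rw [fAct, if_pos h, pil_cons, ih hl.2, pil_cons, mul_assoc]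
    · rw [fAct, if_neg h, pil_cons]
      have hgt : ∀ y ∈ a :: t, k < y := by
        intro y hy
        rcases List.mem_cons.1 hy with rfl | hy
        · omega
        · have := hl.1 y hy; omega
      rw [← pil_shift hgt]

lemma nf_spec : ∀ l : List ℕ, (nf (pil l)).Pairwise (· ≤ ·) ∧ pil (nf (pil l)) = pil l := by
  intro l
  induction l using List.reverseRecOn with
  | nil => rw [pil_nil, nf_one]; exact ⟨List.Pairwise.nil, rfl⟩
  | append_singleton l k ih =>
    rw [pil_append, pil_singleton, nf_mul_xM]
    exact ⟨fAct_sorted ih.1 k, by rw [pil_fAct ih.1, ih.2]⟩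

lemma nf_sorted (g : ThompsonM) : (nf g).Pairwise (· ≤ ·) := by
  obtain ⟨l, rfl⟩ := exists_pil g
  exact (nf_spec l).1

lemma pil_nf (g : ThompsonM) : pil (nf g) = g := by
  obtain ⟨l, rfl⟩ := exists_pil g
  exact (nf_spec l).2

lemma nf_pil_sorted : ∀ {l : List ℕ}, l.Pairwise (· ≤ ·) → nf (pil l) = l := by
  intro l
  induction l using List.reverseRecOn with
  | nil => intro _; rw [pil_nil, nf_one]
  | append_singleton l k ih =>
    intro hs
    rw [List.pairwise_append] at hs
    rw [pil_append, pil_singleton, nf_mul_xM, ih hs.1,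
      fAct_of_le fun y hy => hs.2.2 y hy k (List.mem_singleton_self k)]

lemma nf_injective : Function.Injective nf := by
  intro g h hgh
  rw [← pil_nf g, ← pil_nf h, hgh]

lemma shiftM_xM (n : ℕ) : shiftM (xM n) = xM (n + 1) := by
  unfold shiftM xM
  rfl

lemma shiftM_pil (l : List ℕ) : shiftM (pil l) = pil (l.map (· + 1)) := by
  induction l with
  | nil => rw [pil_nil, map_one, List.map_nil, pil_nil]
  | cons a t ih => rw [pil_cons, map_mul, shiftM_xM, ih, List.map_cons, pil_cons]

lemma nf_shiftM (g : ThompsonM) : nf (shiftM g) = (nf g).map (· + 1) := by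
  conv_lhs => rw [← pil_nf g]
  rw [shiftM_pil]
  exact nf_pil_sorted (List.Pairwise.map _ (fun h => by omega) (nf_sorted g))

lemma shiftM_injective : Function.Injective shiftM := by
  intro g h hgh
  apply nf_injective
  have := congrArg nf hgh
  rw [nf_shiftM, nf_shiftM] at this
  exact List.map_injective_iff.2 (fun a b h => by omega) this

lemma mlen_pil (l : List ℕ) : mlen (pil l) = l.length := by
  unfold mlen lenM pil
  rfl

lemma length_nf (g : ThompsonM) : (nf g).length = mlen g := by
  conv_rhs => rw [← pil_nf g]
  rw [mlen_pil]

lemma eq_one_of_mlen_eq_zero {g : ThompsonM} (h : mlen g = 0) : g = 1 := by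
  have h1 : nf g = [] := List.eq_nil_of_length_eq_zero (by rw [length_nf, h])
  rw [← pil_nf g, h1, pil_nil]

/-- number of leading zeros in the normal form -/
def zc (g : ThompsonM) : ℕ := ((nf g).takeWhile (· == 0)).length

/-- the normal form with leading zeros removed, shifted down -/
def tlist (g : ThompsonM) : List ℕ := ((nf g).dropWhile (· == 0)).map (· - 1)

/-- the "unshifted quotient" of `g` by its leading `x_0` power -/
def stg (g : ThompsonM) : ThompsonM := pil (tlist g)

/-- smallest index: head of the normal form -/
def mina (g : ThompsonM) : ℕ := (nf g).headI

lemma takeWhile_eq_replicate (g : ThompsonM) :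
    (nf g).takeWhile (· == 0) = List.replicate (zc g) 0 := by
  refine List.eq_replicate_length.2 fun b hb => ?_
  have := List.mem_takeWhile_imp hb
  simpa using this

lemma dropWhile_pos {l : List ℕ} (hl : l.Pairwise (· ≤ ·)) :
    ∀ y ∈ l.dropWhile (· == 0), 1 ≤ y := by
  induction l with
  | nil => simp
  | cons a t ih =>
    rw [List.pairwise_cons] at hl
    by_cases h : a = 0
    · rw [List.dropWhile_cons_of_pos (by simpa using h)]
      exact ih hl.2
    · rw [List.dropWhile_cons_of_neg (by simpa using h)]
      intro y hy
      rcases List.mem_cons.1 hy with rfl | hy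
      · omega
      · have := hl.1 y hy; omega

lemma pil_replicate (n : ℕ) : pil (List.replicate n 0) = xM 0 ^ n := by
  induction n with
  | zero => rw [pow_zero]; exact pil_nil
  | succ n ih => rw [List.replicate_succ, pil_cons, ih, pow_succ, pow_mul_comm']

lemma g_dec (g : ThompsonM) : g = xM 0 ^ zc g * shiftM (stg g) := by
  conv_lhs => rw [← pil_nf g,
    ← List.takeWhile_append_dropWhile (p := (· == 0)) (l := nf g)]
  rw [pil_append, takeWhile_eq_replicate, pil_replicate]
  congr 1
  unfold stg tlist
  rw [shiftM_pil, List.map_map]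
  congr 1
  have hpos := dropWhile_pos (nf_sorted g)
  calc (nf g).dropWhile (· == 0)
      = ((nf g).dropWhile (· == 0)).map id := (List.map_id _).symm
    _ = ((nf g).dropWhile (· == 0)).map ((· + 1) ∘ (· - 1)) := by
        apply List.map_congr_left
        intro x hx
        have := hpos x hx
        simp only [Function.comp_apply, id_eq]
        omega

lemma take_drop_len (g : ThompsonM) :
    zc g + ((nf g).dropWhile (· == 0)).length = mlen g := by
  have := congrArg List.length (List.takeWhile_append_dropWhile (p := (· == 0)) (l := nf g))
  rw [List.length_append, length_nf] at this
  exact this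

lemma mlen_stg (g : ThompsonM) : mlen (stg g) = mlen g - zc g := by
  unfold stg tlist
  rw [mlen_pil, List.length_map]
  have := take_drop_len g
  omega

lemma zc_le (g : ThompsonM) : zc g ≤ mlen g := by
  have := take_drop_len g
  omega

lemma tlist_sorted (g : ThompsonM) : (tlist g).Pairwise (· ≤ ·) := by
  unfold tlist
  refine List.Pairwise.map _ (fun a b hab => ?_)
    (List.Pairwise.sublist (List.dropWhile_sublist _) (nf_sorted g))
  omega

lemma nf_stg (g : ThompsonM) : nf (stg g) = tlist g :=
  nf_pil_sorted (tlist_sorted g)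

lemma zc_zero_facts {g : ThompsonM} (h : zc g = 0) (hne : nf g ≠ []) :
    1 ≤ mina g ∧ mina (stg g) = mina g - 1 := by
  have hdw : (nf g).dropWhile (· == 0) = nf g := by
    have := List.takeWhile_append_dropWhile (p := (· == 0)) (l := nf g)
    have h2 : ((nf g).takeWhile (· == 0)) = [] :=
      List.eq_nil_of_length_eq_zero h
    rw [h2] at this
    simpa using this
  obtain ⟨a, t, hat⟩ := List.exists_cons_of_ne_nil hne
  have ha : a ≠ 0 := by
    intro h0
    have : (nf g).takeWhile (· == 0) = [] := List.eq_nil_of_length_eq_zero h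
    rw [hat, h0, List.takeWhile_cons_of_pos (by simp)] at this
    simp at this
  constructor
  · unfold mina; rw [hat]; simpa using Nat.one_le_iff_ne_zero.2 ha
  · unfold mina
    rw [nf_stg]
    unfold tlist
    rw [hdw, hat, List.map_cons]
    rfl

section AlgebraLayer

variable {K : Type*} [Field K]

lemma shiftA_apply (x : MonoidAlgebra K ThompsonM) :
    shiftA K x = MonoidAlgebra.mapDomain shiftM x := rfl

lemma shiftA_single (g : ThompsonM) (e : K) :
    shiftA K (MonoidAlgebra.single g e) = MonoidAlgebra.single (shiftM g) e := by
  rw [shiftA_apply, MonoidAlgebra.mapDomain_single]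

lemma shiftA_injective : Function.Injective (shiftA K) := fun x y h =>
  MonoidAlgebra.mapDomain_injective shiftM_injective (by rw [← shiftA_apply, ← shiftA_apply, h])

lemma iter_shiftA_ne_zero {b : MonoidAlgebra K ThompsonM} (hb : b ≠ 0) (i : ℕ) :
    (⇑(shiftA K))^[i] b ≠ 0 := by
  induction i with
  | zero => exact hb
  | succ i ih =>
    rw [Function.iterate_succ_apply']
    intro h0
    exact ih (shiftA_injective (by rw [h0, map_zero]))

lemma XMa_zero_def : XMa K 0 = MonoidAlgebra.single (xM 0) 1 := rfl

lemma XMa_pow (k : ℕ) : XMa K 0 ^ k = MonoidAlgebra.single (xM 0 ^ k) 1 := by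
  rw [XMa_zero_def, MonoidAlgebra.single_pow, one_pow]

lemma shiftM2_x0 (g : ThompsonM) : shiftM g * xM 0 = xM 0 * shiftM (shiftM g) := by
  obtain ⟨l, rfl⟩ := exists_pil g
  have hpos : ∀ y ∈ l.map (· + 1), 0 < y := by
    intro y hy
    obtain ⟨z, _, rfl⟩ := List.mem_map.1 hy
    omega
  rw [shiftM_pil, pil_shift hpos, shiftM_pil]

lemma shiftA_mul_X0 (y : MonoidAlgebra K ThompsonM) :
    shiftA K y * XMa K 0 = XMa K 0 * shiftA K (shiftA K y) := by
  induction y using MonoidAlgebra.induction_linear with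
  | zero => simp
  | add f g hf hg => simp only [map_add, add_mul, mul_add, hf, hg]
  | single g e =>
    simp only [shiftA_single]
    rw [XMa_zero_def, MonoidAlgebra.single_mul_single, MonoidAlgebra.single_mul_single,
      shiftM2_x0, mul_one, one_mul]

lemma iter_shiftA_mul_X0 {j : ℕ} (hj : 1 ≤ j) (y : MonoidAlgebra K ThompsonM) :
    (⇑(shiftA K))^[j] y * XMa K 0 = XMa K 0 * (⇑(shiftA K))^[j + 1] y := by
  obtain ⟨j', rfl⟩ : ∃ j', j = j' + 1 := ⟨j - 1, by omega⟩
  rw [Function.iterate_succ_apply', Function.iterate_succ_apply' (n := j' + 1),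
    Function.iterate_succ_apply' (n := j')]
  exact shiftA_mul_X0 _

lemma X0_pow_shift (b : MonoidAlgebra K ThompsonM) :
    ∀ k l : ℕ, k < l → XMa K 0 ^ k * (⇑(shiftA K))^[l] b
      = (⇑(shiftA K))^[l - k] b * XMa K 0 ^ k
  | 0, l, _ => by simp
  | k + 1, l, hkl => by
    have e1 : XMa K 0 * (⇑(shiftA K))^[l] b = (⇑(shiftA K))^[l - 1] b * XMa K 0 := by
      have h := (iter_shiftA_mul_X0 (j := l - 1) (by omega) b).symm
      rwa [show l - 1 + 1 = l by omega] at h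
    calc XMa K 0 ^ (k + 1) * (⇑(shiftA K))^[l] b
        = XMa K 0 ^ k * (XMa K 0 * (⇑(shiftA K))^[l] b) := by
          rw [pow_succ, mul_assoc]
      _ = XMa K 0 ^ k * ((⇑(shiftA K))^[l - 1] b * XMa K 0) := by rw [e1]
      _ = (XMa K 0 ^ k * (⇑(shiftA K))^[l - 1] b) * XMa K 0 := by rw [mul_assoc]
      _ = ((⇑(shiftA K))^[l - 1 - k] b * XMa K 0 ^ k) * XMa K 0 := by
          rw [X0_pow_shift b k (l - 1) (by omega)]
      _ = (⇑(shiftA K))^[l - (k + 1)] b * XMa K 0 ^ (k + 1) := by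
          rw [mul_assoc, ← pow_succ, show l - 1 - k = l - (k + 1) by omega]

/-- membership in the right ideal generated by `φ^N b, φ^{N+1} b, …` -/
def InI (b : MonoidAlgebra K ThompsonM) (N : ℕ) (x : MonoidAlgebra K ThompsonM) : Prop :=
  ∃ (mm : ℕ) (u : ℕ → MonoidAlgebra K ThompsonM),
    x = ∑ j ∈ Finset.range mm, (⇑(shiftA K))^[N + j] b * u j

lemma InI.zero {b : MonoidAlgebra K ThompsonM} {N : ℕ} : InI b N 0 :=
  ⟨0, fun _ => 0, by simp⟩

lemma InI.base {b : MonoidAlgebra K ThompsonM} {N e : ℕ} (he : N ≤ e)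
    (r : MonoidAlgebra K ThompsonM) : InI b N ((⇑(shiftA K))^[e] b * r) := by
  refine ⟨e - N + 1, fun j => if j = e - N then r else 0, ?_⟩
  have h1 : ∀ j ∈ Finset.range (e - N + 1),
      (⇑(shiftA K))^[N + j] b * (if j = e - N then r else 0)
        = if j = e - N then (⇑(shiftA K))^[N + j] b * r else 0 := by
    intro j _
    split <;> simp
  rw [Finset.sum_congr rfl h1, Finset.sum_ite_eq' (Finset.range (e - N + 1))]
  rw [if_pos (Finset.mem_range.2 (by omega)), show N + (e - N) = e by omega]

lemma InI.add {b : MonoidAlgebra K ThompsonM} {N : ℕ}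
    {x y : MonoidAlgebra K ThompsonM} (hx : InI b N x) (hy : InI b N y) :
    InI b N (x + y) := by
  obtain ⟨m1, u, rfl⟩ := hx
  obtain ⟨m2, v, rfl⟩ := hy
  refine ⟨max m1 m2, fun j => (if j < m1 then u j else 0) + (if j < m2 then v j else 0), ?_⟩
  have hpad : ∀ (m : ℕ) (w : ℕ → MonoidAlgebra K ThompsonM), m ≤ max m1 m2 →
      ∑ j ∈ Finset.range m, (⇑(shiftA K))^[N + j] b * w j
        = ∑ j ∈ Finset.range (max m1 m2),
            (⇑(shiftA K))^[N + j] b * (if j < m then w j else 0) := by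
    intro m w hm
    rw [← Finset.sum_subset (Finset.range_subset_range.2 hm)
      (fun j _ hj => by rw [if_neg (by simpa using hj), mul_zero])]
    exact Finset.sum_congr rfl fun j hj => by rw [if_pos (Finset.mem_range.1 hj)]
  rw [hpad m1 u (le_max_left _ _), hpad m2 v (le_max_right _ _), ← Finset.sum_add_distrib]
  exact Finset.sum_congr rfl fun j _ => (mul_add _ _ _).symm

lemma InI.sum {b : MonoidAlgebra K ThompsonM} {N : ℕ} {ι : Type*} {s : Finset ι}
    {f : ι → MonoidAlgebra K ThompsonM} (h : ∀ i ∈ s, InI b N (f i)) :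
    InI b N (∑ i ∈ s, f i) :=
  Finset.sum_induction f _ (fun _ _ ha hb => InI.add ha hb) InI.zero h

lemma InI.smul {b : MonoidAlgebra K ThompsonM} {N : ℕ} {x : MonoidAlgebra K ThompsonM}
    (γ : K) (hx : InI b N x) : InI b N (γ • x) := by
  obtain ⟨mm, u, rfl⟩ := hx
  refine ⟨mm, fun j => γ • u j, ?_⟩
  rw [Finset.smul_sum]
  exact Finset.sum_congr rfl fun j _ => (mul_smul_comm _ _ _).symm

end AlgebraLayer

section DecompositionLayer

variable {K : Type*} [Field K]

/-- the `k`-th `x_0`-component of an element of the monoid ring, unshifted -/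
noncomputable def cdec (k : ℕ) (c : MonoidAlgebra K ThompsonM) : MonoidAlgebra K ThompsonM :=
  c.coeff.sum fun g e => if zc g = k then MonoidAlgebra.single (stg g) e else 0

lemma cdec_support {k : ℕ} {c : MonoidAlgebra K ThompsonM} :
    ∀ h ∈ (cdec k c).coeff.support, ∃ g ∈ c.coeff.support, zc g = k ∧ h = stg g := by
  classical
  intro h hh
  unfold cdec at hh
  rw [MonoidAlgebra.coeff_finsuppSum] at hh
  have h1 := Finsupp.support_sum hh
  obtain ⟨g, hg, hmem⟩ := Finset.mem_biUnion.1 h1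
  by_cases hzc : zc g = k
  · rw [if_pos hzc] at hmem
    have := Finsupp.support_single_subset hmem
    exact ⟨g, hg, hzc, (Finset.mem_singleton.1 this)⟩
  · rw [if_neg hzc] at hmem
    simp at hmem

lemma cdec_dec (c : MonoidAlgebra K ThompsonM) (D : ℕ)
    (hD : ∀ g ∈ c.coeff.support, zc g ≤ D) :
    c = ∑ k ∈ Finset.range (D + 1), XMa K 0 ^ k * shiftA K (cdec k c) := by
  have h1 : ∀ k, XMa K 0 ^ k * shiftA K (cdec k c)
      = ∑ g ∈ c.coeff.support, (if zc g = k then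
          MonoidAlgebra.single (xM 0 ^ k * shiftM (stg g)) (c.coeff g) else 0) := by
    intro k
    unfold cdec Finsupp.sum
    rw [map_sum, Finset.mul_sum]
    refine Finset.sum_congr rfl fun g hg => ?_
    dsimp only
    split
    · rw [shiftA_single, XMa_pow, MonoidAlgebra.single_mul_single, one_mul]
    · rw [map_zero, mul_zero]
  rw [Finset.sum_congr rfl fun k _ => h1 k, Finset.sum_comm]
  have h2 : ∀ g ∈ c.coeff.support, (∑ k ∈ Finset.range (D + 1), if zc g = k then
      MonoidAlgebra.single (xM 0 ^ k * shiftM (stg g)) (c.coeff g) else 0)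
        = MonoidAlgebra.single g (c.coeff g) := by
    intro g hg
    rw [Finset.sum_ite_eq (Finset.range (D + 1)) (zc g),
      if_pos (Finset.mem_range.2 (Nat.lt_succ_of_le (hD g hg)))]
    rw [← g_dec g]
  rw [Finset.sum_congr rfl h2]
  exact (MonoidAlgebra.sum_coeff_single c).symm

lemma InI.push {b : MonoidAlgebra K ThompsonM} {N₀ D k : ℕ} (hk : k ≤ D)
    {x : MonoidAlgebra K ThompsonM} (hx : InI b (N₀ + D) x) :
    InI b N₀ (XMa K 0 ^ k * shiftA K x) := by
  obtain ⟨mm, u, rfl⟩ := hx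
  rw [map_sum, Finset.mul_sum]
  refine InI.sum fun j _ => ?_
  rw [map_mul, ← Function.iterate_succ_apply' (⇑(shiftA K)) (N₀ + D + j) b, ← mul_assoc,
    X0_pow_shift b k (N₀ + D + j + 1) (by omega), mul_assoc]
  exact InI.base (by omega) _

lemma mdeg_le_iff {c : MonoidAlgebra K ThompsonM} {D : ℕ} :
    mdeg c ≤ D ↔ ∀ g ∈ c.coeff.support, mlen g ≤ D := Finset.sup_le_iff

end DecompositionLayer

section KeyLemma

variable {K : Type*} [Field K]

lemma key_base {b : MonoidAlgebra K ThompsonM} (hb : b ≠ 0) (N₀ : ℕ)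
    (s : Finset (MonoidAlgebra K ThompsonM)) (hs : ∀ c ∈ s, mdeg c ≤ 0) :
    ∃ a : MonoidAlgebra K ThompsonM, a ≠ 0 ∧ ∀ c ∈ s, InI b N₀ (c * a) := by
  refine ⟨(⇑(shiftA K))^[N₀] b, iter_shiftA_ne_zero hb N₀, fun c hc => ?_⟩
  have hsupp : c.coeff.support ⊆ {1} := by
    intro g hg
    rw [Finset.mem_singleton]
    refine eq_one_of_mlen_eq_zero (Nat.le_zero.1 (le_trans ?_ (hs c hc)))
    exact Finset.le_sup (f := mlen) hg
  have hc1 : c = MonoidAlgebra.single 1 (c.coeff 1) := MonoidAlgebra.coeff_injective (Finsupp.support_subset_singleton.1 hsupp)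
  rw [hc1]
  have h1 : MonoidAlgebra.single (1 : ThompsonM) (c.coeff 1)
      = (c.coeff 1) • (1 : MonoidAlgebra K ThompsonM) := by
    rw [MonoidAlgebra.one_def, MonoidAlgebra.smul_single, smul_eq_mul, mul_one]
  rw [h1, smul_mul_assoc, one_mul]
  have h2 := InI.base (b := b) (N := N₀) le_rfl 1
  rw [mul_one] at h2
  exact InI.smul (c.coeff 1) h2

lemma key_step [DecidableEq (MonoidAlgebra K ThompsonM)] {b : MonoidAlgebra K ThompsonM} (N₀ d : ℕ)
    (s : Finset (MonoidAlgebra K ThompsonM)) (hs : ∀ c ∈ s, mdeg c ≤ d)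
    (h : ∃ a' : MonoidAlgebra K ThompsonM, a' ≠ 0 ∧
      ∀ c' ∈ Finset.image (fun p : MonoidAlgebra K ThompsonM × ℕ => cdec p.2 p.1)
        (s ×ˢ Finset.range (d + 1)), InI b (N₀ + d) (c' * a')) :
    ∃ a : MonoidAlgebra K ThompsonM, a ≠ 0 ∧ ∀ c ∈ s, InI b N₀ (c * a) := by
  classical
  obtain ⟨a', ha', hI⟩ := h
  refine ⟨shiftA K a', fun h0 => ha' (shiftA_injective (by rw [h0, map_zero])),
    fun c hc => ?_⟩
  have hzc : ∀ g ∈ c.coeff.support, zc g ≤ d := fun g hg =>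
    le_trans (zc_le g) (le_trans (Finset.le_sup (f := mlen) hg) (hs c hc))
  rw [cdec_dec c d hzc, Finset.sum_mul]
  refine InI.sum fun k hk => ?_
  rw [mul_assoc, ← map_mul]
  refine InI.push (Nat.lt_succ_iff.1 (Finset.mem_range.1 hk)) ?_
  exact hI _ (Finset.mem_image.2 ⟨(c, k), Finset.mem_product.2 ⟨hc, hk⟩, rfl⟩)

lemma key : ∀ (d m : ℕ) (b : MonoidAlgebra K ThompsonM), b ≠ 0 → ∀ (N₀ : ℕ)
    (s : Finset (MonoidAlgebra K ThompsonM)),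
    (∀ c ∈ s, mdeg c ≤ d ∧ ∀ g ∈ c.coeff.support, mlen g = d → mina g ≤ m) →
    ∃ a : MonoidAlgebra K ThompsonM, a ≠ 0 ∧ ∀ c ∈ s, InI b N₀ (c * a) := by
  classical
  intro d
  induction d using Nat.strong_induction_on with
  | _ d ihd =>
    intro m
    induction m with
    | zero =>
      intro b hb N₀ s hs
      rcases Nat.eq_zero_or_pos d with hd | hd
      · subst hd
        exact key_base hb N₀ s fun c hc => (hs c hc).1
      · obtain ⟨e, rfl⟩ : ∃ e, d = e + 1 := ⟨d - 1, by omega⟩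
        apply key_step N₀ (e + 1) s (fun c hc => (hs c hc).1)
        set s' := Finset.image (fun p : MonoidAlgebra K ThompsonM × ℕ => cdec p.2 p.1)
          (s ×ˢ Finset.range (e + 1 + 1)) with hs'
        refine ihd e (by omega) (s'.sup fun c => c.coeff.support.sup mina) b hb
          (N₀ + (e + 1)) s' (fun c' hc' => ⟨?_, ?_⟩)
        · -- mdeg c' ≤ e
          rw [hs'] at hc'
          obtain ⟨⟨c, k⟩, hmem, rfl⟩ := Finset.mem_image.1 hc'
          have hcs : c ∈ s := (Finset.mem_product.1 hmem).1
          refine mdeg_le_iff.2 fun h hh => ?_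
          obtain ⟨g, hg, hzck, rfl⟩ := cdec_support h hh
          have hlg : mlen g ≤ e + 1 := le_trans (Finset.le_sup (f := mlen) hg) (hs c hcs).1
          have hlst : mlen (stg g) = mlen g - zc g := mlen_stg g
          rcases Nat.eq_zero_or_pos k with hk0 | hk0
          · -- k = 0 : cannot have full length
            subst hk0
            by_contra hcon
            have h1 : mlen (stg g) = e + 1 := by omega
            have h2 : mlen g = e + 1 := by omega
            have h3 := (hs c hcs).2 g hg h2
            have hne : nf g ≠ [] := by
              intro h0
              have := length_nf g
              rw [h0] at this
              simp at this
              omega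
            have h4 := (zc_zero_facts hzck hne).1
            omega
          · omega
        · -- mina bound, trivial by construction
          intro g hg _
          exact le_trans (Finset.le_sup (f := mina) hg) (Finset.le_sup (f := fun c => c.coeff.support.sup mina) hc')
    | succ m ihm =>
      intro b hb N₀ s hs
      rcases Nat.eq_zero_or_pos d with hd | hd
      · subst hd
        exact key_base hb N₀ s fun c hc => (hs c hc).1
      · apply key_step N₀ d s (fun c hc => (hs c hc).1)
        apply ihm b hb (N₀ + d)
        intro c' hc'
        obtain ⟨⟨c, k⟩, hmem, rfl⟩ := Finset.mem_image.1 hc'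
        have hcs : c ∈ s := (Finset.mem_product.1 hmem).1
        constructor
        · -- mdeg (cdec k c) ≤ d
          refine mdeg_le_iff.2 fun h hh => ?_
          obtain ⟨g, hg, hzck, rfl⟩ := cdec_support h hh
          have hlg : mlen g ≤ d := le_trans (Finset.le_sup (f := mlen) hg) (hs c hcs).1
          have hlst : mlen (stg g) = mlen g - zc g := mlen_stg g
          omega
        · -- mina bound
          intro h hh hlen
          obtain ⟨g, hg, hzck, rfl⟩ := cdec_support h hh
          have hlg : mlen g ≤ d := le_trans (Finset.le_sup (f := mlen) hg) (hs c hcs).1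
          have hlst : mlen (stg g) = mlen g - zc g := mlen_stg g
          have hk0 : zc g = 0 := by omega
          have hlgd : mlen g = d := by omega
          have h3 := (hs c hcs).2 g hg hlgd
          have hne : nf g ≠ [] := by
            intro h0
            have := length_nf g
            rw [h0] at this
            simp at this
            omega
          obtain ⟨h4, h5⟩ := zc_zero_facts hk0 hne
          omega

end KeyLemma

/-- for nonzero `b ∈ K[M]`, the set `{b, φ(b), φ²(b), …}` is not a
free basis of the right `K[M]`-module it generates. -/
theorem stmt8 (K : Type*) [Field K] (b : MonoidAlgebra K ThompsonM) (hb : b ≠ 0) :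
    ∃ (m : ℕ) (u : ℕ → MonoidAlgebra K ThompsonM),
      (∃ i ≤ m, u i ≠ 0) ∧
      ∑ i ∈ Finset.range (m + 1), (⇑(shiftA K))^[i] b * u i = 0 := by
  obtain ⟨a, ha, hI⟩ := key (mdeg b) (b.coeff.support.sup mina) b hb 1 {b} (by
    intro c hc
    rw [Finset.mem_singleton] at hc
    subst hc
    exact ⟨le_rfl, fun g hg _ => Finset.le_sup (f := mina) hg⟩)
  obtain ⟨mm, v, hv⟩ := hI b (Finset.mem_singleton_self b)
  refine ⟨mm, fun i => if i = 0 then a else -(v (i - 1)),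
    ⟨0, Nat.zero_le _, by simpa using ha⟩, ?_⟩
  rw [Finset.sum_range_succ']
  have h1 : ∀ i ∈ Finset.range mm,
      (⇑(shiftA K))^[i + 1] b * (if i + 1 = 0 then a else -(v (i + 1 - 1)))
        = -((⇑(shiftA K))^[1 + i] b * v i) := by
    intro i _
    rw [if_neg (Nat.succ_ne_zero i), show i + 1 = 1 + i by omega]
    simp [mul_neg]
  rw [Finset.sum_congr rfl h1]
  show _ + (⇑(shiftA K))^[0] b * (if (0 : ℕ) = 0 then a else -(v (0 - 1))) = 0
  rw [if_pos rfl, Finset.sum_neg_distrib, ← hv, Function.iterate_zero_apply]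
  exact neg_add_cancel _
end

section
/- Let R = K[F] be the group ring of Thompson's group F over a field K. For any element b ∈ R, the equation (1 - x_0)·u = b·v has a solution (u, v) ∈ R² with (u, v) ≠ (0, 0). -/
/-! ### Auxiliary development for `stmt9` -/

namespace Stmt9Aux

/-- The defining relation of `F`, available in the presented group. -/
lemma xF_rel {i j : ℕ} (hij : i < j) : xF j * xF i = xF i * xF (j + 1) := by
  have h : (FreeGroup.of j * FreeGroup.of i *
      (FreeGroup.of i * FreeGroup.of (j + 1))⁻¹ : FreeGroup ℕ) ∈ thompsonRels :=
    ⟨i, j, hij, rfl⟩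
  have h1 : PresentedGroup.mk thompsonRels
      (FreeGroup.of j * FreeGroup.of i * (FreeGroup.of i * FreeGroup.of (j + 1))⁻¹) = 1 :=
    (QuotientGroup.eq_one_iff _).2 (Subgroup.subset_normalClosure h)
  rw [map_mul, map_mul, map_inv, map_mul, mul_inv_eq_one] at h1
  simpa [xF, PresentedGroup.of] using h1

/-- The homomorphism `λ₀ : F → ℤ` sending `x_0 ↦ 1`, `x_i ↦ 0` for `i ≥ 1`. -/
def lam0 : ThompsonF →* Multiplicative ℤ :=
  PresentedGroup.toGroup (f := fun n => Multiplicative.ofAdd (if n = 0 then (1:ℤ) else 0)) (by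
    rintro r ⟨i, j, hij, rfl⟩
    have hj : (if j = 0 then (1:ℤ) else 0) = 0 := by rw [if_neg]; omega
    have hj1 : (if j + 1 = 0 then (1:ℤ) else 0) = 0 := by rw [if_neg]; omega
    simp only [map_mul, map_inv, FreeGroup.lift_apply_of, mul_inv_eq_one, hj, hj1]
    rw [mul_comm])

/-- Additive version of `lam0`. -/
def l0 (f : ThompsonF) : ℤ := Multiplicative.toAdd (lam0 f)

lemma l0_mul (f g : ThompsonF) : l0 (f * g) = l0 f + l0 g := by
  simp [l0, map_mul]

lemma l0_one : l0 (1 : ThompsonF) = 0 := by simp [l0]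

lemma l0_xF (n : ℕ) : l0 (xF n) = if n = 0 then 1 else 0 := by
  have : lam0 (xF n) = Multiplicative.ofAdd (if n = 0 then (1:ℤ) else 0) :=
    PresentedGroup.toGroup.of _
  simp [l0, this]

/-- `x_0` as element of `F`. -/
def X0 : ThompsonF := xF 0

/-- Integer powers of `x_0`. -/
def Xz (z : ℤ) : ThompsonF := X0 ^ z

lemma Xz_add (a b : ℤ) : Xz (a + b) = Xz a * Xz b := zpow_add _ _ _

lemma Xz_zero : Xz 0 = 1 := zpow_zero _

lemma Xz_one : Xz 1 = X0 := zpow_one _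

lemma Xz_neg_cancel (a : ℤ) : Xz a * Xz (-a) = 1 := by
  rw [← Xz_add]; simp [Xz_zero]

lemma Xz_cancel_neg (a : ℤ) : Xz (-a) * Xz a = 1 := by
  rw [← Xz_add]; simp [Xz_zero]

lemma Xz_inv (a : ℤ) : (Xz a)⁻¹ = Xz (-a) := (zpow_neg X0 a).symm

lemma Xz_negone : Xz (-1) = X0⁻¹ := by
  rw [← Xz_inv, Xz_one]

lemma l0_Xz (z : ℤ) : l0 (Xz z) = z := by
  have h0 : l0 X0 = 1 := by simpa [X0] using l0_xF 0
  have : lam0 (Xz z) = (lam0 X0) ^ z := by rw [Xz, map_zpow]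
  simp only [l0, this, toAdd_zpow]
  have : Multiplicative.toAdd (lam0 X0) = 1 := h0
  rw [this]; simp

lemma conj_step {j : ℕ} (hj : 1 ≤ j) : X0⁻¹ * xF j * X0 = xF (j + 1) := by
  have h := xF_rel (show 0 < j from hj)
  simp only [X0]
  rw [mul_assoc, h, ← mul_assoc, inv_mul_cancel, one_mul]

lemma conj_nat (i : ℕ) (hi : 1 ≤ i) (k : ℕ) :
    Xz (-(k : ℤ)) * xF i * Xz (k : ℤ) = xF (i + k) := by
  induction k generalizing i with
  | zero => simp [Xz_zero]
  | succ k ih =>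
    have h1 : Xz (-(((k:ℤ)+1))) = Xz (-(k:ℤ)) * X0⁻¹ := by
      rw [show -((k:ℤ)+1) = -(k:ℤ) + (-1) by ring, Xz_add, Xz_negone]
    have h2 : Xz ((k:ℤ)+1) = X0 * Xz (k:ℤ) := by
      rw [show (k:ℤ)+1 = 1 + (k:ℤ) by ring, Xz_add, Xz_one]
    have hcast : ((k+1 : ℕ) : ℤ) = (k:ℤ) + 1 := by push_cast; ring
    rw [hcast, h1, h2]
    have : Xz (-(k:ℤ)) * X0⁻¹ * xF i * (X0 * Xz (k:ℤ))
        = Xz (-(k:ℤ)) * (X0⁻¹ * xF i * X0) * Xz (k:ℤ) := by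
      group
    rw [this, conj_step hi, ih (i+1) (by omega)]
    congr 1
    omega

lemma conj_z (i : ℕ) (hi : 1 ≤ i) (z : ℤ) (hz : 0 ≤ z) :
    Xz (-z) * xF i * Xz z = xF (i + z.toNat) := by
  have : z = (z.toNat : ℤ) := (Int.toNat_of_nonneg hz).symm
  rw [this]
  exact conj_nat i hi z.toNat

end Stmt9Aux

namespace Stmt9Aux

/-- Pushing a far generator through an arbitrary element of `F`:
for every `f` there are `d` and a threshold `M` with `x_m f = f x_{m+d}` for `m ≥ M`. -/
lemma pushA (f : ThompsonF) :
    ∃ (d : ℤ) (M : ℕ), 1 ≤ (M:ℤ) + d ∧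
      ∀ m : ℕ, M ≤ m → xF m * f = f * xF ((m:ℤ) + d).toNat := by
  induction f using PresentedGroup.induction_on with
  | _ w =>
  induction w using FreeGroup.induction_on with
  | C1 =>
    refine ⟨0, 1, by omega, fun m hm => ?_⟩
    rw [map_one, mul_one, one_mul]
    congr 1
  | of x =>
    refine ⟨1, x + 1, by omega, fun m hm => ?_⟩
    have hx : (PresentedGroup.mk thompsonRels (FreeGroup.of x) : ThompsonF) = xF x := rfl
    rw [hx, xF_rel (show x < m by omega)]
    congr 1
  | inv_of x _ =>
    refine ⟨-1, x + 2, by omega, fun m hm => ?_⟩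
    have hx : (PresentedGroup.mk thompsonRels (FreeGroup.of x) : ThompsonF) = xF x := rfl
    rw [map_inv, hx]
    have hm1 : m - 1 + 1 = m := by omega
    have h := xF_rel (show x < m - 1 by omega)
    rw [hm1] at h
    -- h : xF (m-1) * xF x = xF x * xF m
    have : xF m = (xF x)⁻¹ * xF (m - 1) * xF x := by
      rw [mul_assoc, h, inv_mul_cancel_left]
    rw [this]
    have hidx : ((m:ℤ) + (-1)).toNat = m - 1 := by omega
    rw [hidx]
    group
  | mul x y ihx ihy =>
    obtain ⟨d₁, M₁, hM₁, H₁⟩ := ihx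
    obtain ⟨d₂, M₂, hM₂, H₂⟩ := ihy
    refine ⟨d₁ + d₂, M₁ + M₂ + d₁.natAbs + 1, by
      have := Int.le_natAbs (a := d₁); omega, fun m hm => ?_⟩
    have h1 : M₁ ≤ m := by omega
    have habs := Int.le_natAbs (a := d₁)
    have hd1 : 0 ≤ (m:ℤ) + d₁ := by
      have : -((d₁.natAbs : ℤ)) ≤ d₁ := by
        rw [neg_le]
        exact (Int.le_natAbs (a := -d₁)).trans (by simp)
      omega
    have h2 : M₂ ≤ ((m:ℤ) + d₁).toNat := by omega
    rw [map_mul, ← mul_assoc, H₁ m h1, mul_assoc, H₂ _ h2, ← mul_assoc]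
    congr 2
    omega

/-- Conjugation by `x_0^z`. -/
def cz (z : ℤ) (f : ThompsonF) : ThompsonF := Xz (-z) * f * Xz z

lemma cz_mul (z : ℤ) (f g : ThompsonF) : cz z (f * g) = cz z f * cz z g := by
  unfold cz
  have : Xz (-z) * f * Xz z * (Xz (-z) * g * Xz z)
      = Xz (-z) * f * (Xz z * Xz (-z)) * g * Xz z := by group
  rw [this, Xz_neg_cancel, mul_one]
  group

lemma cz_one (z : ℤ) : cz z 1 = 1 := by
  unfold cz
  rw [mul_one, Xz_cancel_neg]

lemma cz_inv (z : ℤ) (f : ThompsonF) : cz z f⁻¹ = (cz z f)⁻¹ := by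
  unfold cz
  rw [eq_comm, inv_eq_iff_mul_eq_one]
  have : Xz (-z) * f * Xz z * (Xz (-z) * f⁻¹ * Xz z)
      = Xz (-z) * f * (Xz z * Xz (-z)) * f⁻¹ * Xz z := by group
  rw [this, Xz_neg_cancel, mul_one, mul_assoc, mul_assoc, mul_inv_cancel_left,
    Xz_cancel_neg]

lemma l0_cz (z : ℤ) (f : ThompsonF) : l0 (cz z f) = l0 f := by
  unfold cz
  rw [l0_mul, l0_mul, l0_Xz, l0_Xz]
  ring

/-- Conjugates of the generators `x_i`, `i ≥ 1`, by powers of `x_0`. -/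
def Sconj : Set ThompsonF := {h | ∃ (a : ℤ) (i : ℕ), 1 ≤ i ∧ h = Xz a * xF i * Xz (-a)}

lemma closure_conj (k : ℤ) {g : ThompsonF} (hg : g ∈ Subgroup.closure Sconj) :
    Xz k * g * Xz (-k) ∈ Subgroup.closure Sconj := by
  induction hg using Subgroup.closure_induction with
  | mem x hx =>
    obtain ⟨a, i, hi, rfl⟩ := hx
    apply Subgroup.subset_closure
    refine ⟨k + a, i, hi, ?_⟩
    rw [Xz_add, show -(k+a) = -a + -k by ring, Xz_add]
    group
  | one =>
    rw [mul_one, Xz_neg_cancel]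
    exact one_mem _
  | mul x y hx hy ihx ihy =>
    have : Xz k * (x * y) * Xz (-k)
        = (Xz k * x * Xz (-k)) * (Xz k * y * Xz (-k)) := by
      have h2 : Xz (-k) * Xz k = 1 := Xz_cancel_neg k
      have : (Xz k * x * Xz (-k)) * (Xz k * y * Xz (-k))
          = Xz k * x * (Xz (-k) * Xz k) * y * Xz (-k) := by group
      rw [this, h2, mul_one]
      group
    rw [this]
    exact mul_mem ihx ihy
  | inv x hx ihx =>
    have : Xz k * x⁻¹ * Xz (-k) = (Xz k * x * Xz (-k))⁻¹ := by
      rw [mul_inv_rev, mul_inv_rev, Xz_inv, Xz_inv]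
      group
    rw [this]
    exact inv_mem ihx

lemma mem_closure_of_l0 {f : ThompsonF} (hf : l0 f = 0) : f ∈ Subgroup.closure Sconj := by
  suffices h : ∀ w : FreeGroup ℕ,
      (PresentedGroup.mk thompsonRels w : ThompsonF) *
        Xz (-(l0 (PresentedGroup.mk thompsonRels w))) ∈ Subgroup.closure Sconj by
    obtain ⟨w, rfl⟩ := PresentedGroup.mk_surjective thompsonRels f
    have := h w
    rw [hf] at this
    simpa [Xz_zero] using this
  intro w
  induction w using FreeGroup.induction_on with
  | C1 =>
    rw [map_one, one_mul, l0_one]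
    simpa [Xz_zero] using one_mem (Subgroup.closure Sconj)
  | of x =>
    have hx : (PresentedGroup.mk thompsonRels (FreeGroup.of x) : ThompsonF) = xF x := rfl
    rw [hx]
    by_cases h0 : x = 0
    · subst h0
      have h1 : l0 (xF 0) = 1 := by simpa using l0_xF 0
      rw [h1]
      have h2 : (xF 0 : ThompsonF) * Xz (-1) = 1 := by
        rw [Xz_negone]
        exact mul_inv_cancel _
      rw [h2]
      exact one_mem _
    · have h1 : l0 (xF x) = 0 := by simp [l0_xF, h0]
      rw [h1, neg_zero, Xz_zero, mul_one]
      apply Subgroup.subset_closure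
      exact ⟨0, x, by omega, by rw [neg_zero, Xz_zero, one_mul, mul_one]⟩
  | inv_of x _ =>
    have hx : (PresentedGroup.mk thompsonRels (FreeGroup.of x) : ThompsonF) = xF x := rfl
    rw [map_inv, hx]
    have hlx : l0 (xF x)⁻¹ = - l0 (xF x) := by
      have : l0 ((xF x) * (xF x)⁻¹) = 0 := by rw [mul_inv_cancel, l0_one]
      rw [l0_mul] at this
      omega
    rw [hlx]
    by_cases h0 : x = 0
    · subst h0
      have h1 : l0 (xF 0) = 1 := by simpa using l0_xF 0
      rw [h1]
      have h2 : (xF 0 : ThompsonF)⁻¹ * Xz (- -1) = 1 := by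
        rw [neg_neg, Xz_one]
        exact inv_mul_cancel (xF 0)
      rw [h2]
      exact one_mem _
    · have h1 : l0 (xF x) = 0 := by simp [l0_xF, h0]
      rw [h1, neg_zero, neg_zero, Xz_zero, mul_one]
      apply inv_mem
      apply Subgroup.subset_closure
      exact ⟨0, x, by omega, by rw [neg_zero, Xz_zero, one_mul, mul_one]⟩
  | mul x y ihx ihy =>
    rw [map_mul]
    set p := (PresentedGroup.mk thompsonRels x : ThompsonF)
    set q := (PresentedGroup.mk thompsonRels y : ThompsonF)
    have key : p * q * Xz (-(l0 (p * q)))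
        = (p * Xz (-(l0 p))) * (Xz (l0 p) * (q * Xz (-(l0 q))) * Xz (-(l0 p))) := by
      rw [l0_mul]
      have e1 : Xz (-(l0 p + l0 q)) = Xz (-(l0 q)) * Xz (-(l0 p)) := by
        rw [← Xz_add]; congr 1; ring
      rw [e1]
      have h2 : Xz (-(l0 p)) * Xz (l0 p) = 1 := Xz_cancel_neg _
      have : (p * Xz (-(l0 p))) * (Xz (l0 p) * (q * Xz (-(l0 q))) * Xz (-(l0 p)))
          = p * (Xz (-(l0 p)) * Xz (l0 p)) * (q * Xz (-(l0 q))) * Xz (-(l0 p)) := by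
        group
      rw [this, h2, mul_one]
      group
    rw [key]
    exact mul_mem ihx (closure_conj (l0 p) ihy)

/-- The key commutation: conjugates by large powers of `x_0` of an element of
`ker λ₀` push through any fixed element. -/
lemma pairP (f g : ThompsonF) (hf : l0 f = 0) (d : ℤ) (M : ℕ)
    (hp : ∀ m : ℕ, M ≤ m → xF m * g = g * xF ((m:ℤ) + d).toNat) :
    ∃ N : ℤ, ∀ z : ℤ, N ≤ z → cz z f * g = g * cz (z + d) f := by
  have hmem := mem_closure_of_l0 hf
  clear hf
  induction hmem using Subgroup.closure_induction with
  | mem x hx =>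
    obtain ⟨a, i, hi, rfl⟩ := hx
    refine ⟨a + M + d.natAbs + i + 1, fun z hz => ?_⟩
    have habs1 : d ≤ (d.natAbs : ℤ) := Int.le_natAbs
    have habs2 : -(d.natAbs : ℤ) ≤ d := by
      rw [neg_le]; exact (Int.le_natAbs (a := -d)).trans (by simp)
    have hza : 0 ≤ z - a := by omega
    have hzda : 0 ≤ z + d - a := by omega
    have hcz : ∀ y : ℤ, 0 ≤ y - a →
        cz y (Xz a * xF i * Xz (-a)) = xF (i + (y - a).toNat) := by
      intro y hy
      unfold cz
      have : Xz (-y) * (Xz a * xF i * Xz (-a)) * Xz y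
          = (Xz (-y) * Xz a) * xF i * (Xz (-a) * Xz y) := by group
      rw [this, ← Xz_add, ← Xz_add,
        show -y + a = -(y - a) by ring, show -a + y = y - a by ring]
      exact conj_z i hi (y - a) hy
    rw [hcz z hza, hcz (z + d) (by omega), hp (i + (z - a).toNat) (by omega)]
    have : ((i + (z - a).toNat : ℕ) : ℤ) + d = ((i + (z + d - a).toNat : ℕ) : ℤ) := by omega
    rw [this, Int.toNat_natCast]
  | one =>
    exact ⟨0, fun z _ => by rw [cz_one, one_mul, cz_one, mul_one]⟩
  | mul x y hx hy ihx ihy =>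
    obtain ⟨N₁, h₁⟩ := ihx
    obtain ⟨N₂, h₂⟩ := ihy
    refine ⟨max N₁ N₂, fun z hz => ?_⟩
    rw [cz_mul, cz_mul, mul_assoc, h₂ z (le_trans (le_max_right _ _) hz),
      ← mul_assoc, h₁ z (le_trans (le_max_left _ _) hz), mul_assoc]
  | inv x hx ihx =>
    obtain ⟨N₁, h₁⟩ := ihx
    refine ⟨N₁, fun z hz => ?_⟩
    rw [cz_inv, cz_inv]
    have h := h₁ z hz
    apply mul_left_cancel (a := cz z x)
    rw [mul_inv_cancel_left, ← mul_assoc, h, mul_assoc, mul_inv_cancel, mul_one]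

end Stmt9Aux

namespace Stmt9Aux

open MonoidAlgebra

variable {K : Type*} [Field K]

/-- Explicit witness for divisibility of `x_0^k - 1` by `1 - x_0` in the group ring. -/
noncomputable def geom (K : Type*) [Field K] (k : ℤ) : MonoidAlgebra K ThompsonF :=
  if 0 ≤ k then ∑ j ∈ Finset.range k.toNat, single (Xz (j : ℤ)) 1
  else - ∑ j ∈ Finset.range (-k).toNat, single (Xz (-((j : ℤ) + 1))) 1

lemma single_Xz_mul (z w : ℤ) :
    (single (Xz z) (1:K)) * single (Xz w) 1 = single (Xz (z + w)) 1 := by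
  rw [single_mul_single, one_mul, Xz_add]

lemma one_eq_single : (1 : MonoidAlgebra K ThompsonF) = single (Xz 0) 1 := by
  rw [Xz_zero, MonoidAlgebra.one_def]

lemma geom_nat (m : ℕ) :
    (1 - single X0 (1:K)) * (∑ j ∈ Finset.range m, single (Xz (j : ℤ)) 1)
      = 1 - single (Xz (m : ℤ)) 1 := by
  induction m with
  | zero => simp [one_eq_single]
  | succ m ih =>
    rw [Finset.sum_range_succ, mul_add, ih, sub_mul, one_mul]
    have hX : single X0 (1:K) = single (Xz 1) 1 := by rw [Xz_one]
    rw [hX, single_Xz_mul]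
    have h1 : ((m + 1 : ℕ) : ℤ) = 1 + (m : ℤ) := by push_cast; ring
    rw [h1]
    abel

lemma geom_negnat (m : ℕ) :
    (1 - single X0 (1:K)) * (- ∑ j ∈ Finset.range m, single (Xz (-((j:ℤ) + 1))) 1)
      = 1 - single (Xz (-(m : ℤ))) 1 := by
  induction m with
  | zero => simp [one_eq_single]
  | succ m ih =>
    rw [Finset.sum_range_succ, neg_add, mul_add, ih, mul_neg, sub_mul, one_mul]
    have hX : single X0 (1:K) = single (Xz 1) 1 := by rw [Xz_one]
    rw [hX, single_Xz_mul]
    have h1 : (1 : ℤ) + (-((m:ℤ) + 1)) = -(m:ℤ) := by ring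
    rw [h1]
    have h2 : ((m + 1 : ℕ) : ℤ) = (m : ℤ) + 1 := by push_cast; ring
    rw [h2]
    abel

lemma geom_spec (k : ℤ) :
    (1 - single X0 (1:K)) * geom K k = 1 - single (Xz k) 1 := by
  unfold geom
  split_ifs with hk
  · rw [geom_nat]
    have : ((k.toNat : ℕ) : ℤ) = k := by omega
    rw [this]
  · rw [geom_negnat]
    have : (-(((-k).toNat : ℕ) : ℤ)) = k := by omega
    rw [this]

lemma finsupp_eq_sum_single (B : MonoidAlgebra K ThompsonF) :
    B = ∑ g ∈ B.coeff.support, single g (B.coeff g) :=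
  (MonoidAlgebra.sum_coeff_single B).symm

theorem main (K : Type*) [Field K] (b : MonoidAlgebra K ThompsonF) :
    ∃ u v : MonoidAlgebra K ThompsonF,
      (1 - single X0 (1:K)) * u = b * v ∧ (u ≠ 0 ∨ v ≠ 0) := by
  classical
  set B : MonoidAlgebra K ThompsonF :=
    ∑ f ∈ b.coeff.support, single (Xz (-(l0 f)) * f) (b.coeff f) with hBdef
  set u₀ : MonoidAlgebra K ThompsonF :=
    - ∑ f ∈ b.coeff.support, geom K (l0 f) * single (Xz (-(l0 f)) * f) (b.coeff f) with hu₀def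
  have hsplit : b = B + (1 - single X0 (1:K)) * u₀ := by
    have hterm : ∀ f ∈ b.coeff.support,
        single (Xz (-(l0 f)) * f) (b.coeff f)
          - (1 - single X0 (1:K)) * (geom K (l0 f) * single (Xz (-(l0 f)) * f) (b.coeff f))
        = single f (b.coeff f) := by
      intro f _
      rw [← mul_assoc, geom_spec, sub_mul, one_mul, single_mul_single, one_mul]
      have h1 : Xz (l0 f) * (Xz (-(l0 f)) * f) = f := by
        rw [← mul_assoc, Xz_neg_cancel, one_mul]
      rw [h1]
      abel
    calc b = ∑ f ∈ b.coeff.support, single f (b.coeff f) := finsupp_eq_sum_single b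
      _ = ∑ f ∈ b.coeff.support, (single (Xz (-(l0 f)) * f) (b.coeff f)
            - (1 - single X0 (1:K)) * (geom K (l0 f) * single (Xz (-(l0 f)) * f) (b.coeff f))) :=
          (Finset.sum_congr rfl hterm).symm
      _ = B + (1 - single X0 (1:K)) * u₀ := by
          rw [Finset.sum_sub_distrib, hu₀def, mul_neg, ← Finset.mul_sum, ← hBdef]
          abel
  by_cases hB : B = 0
  · refine ⟨u₀, 1, ?_, Or.inr one_ne_zero⟩
    rw [mul_one]
    conv_rhs => rw [hsplit, hB, zero_add]
  · have hBsupp : ∀ g ∈ B.coeff.support, l0 g = 0 := by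
      intro g hg
      rw [hBdef, coeff_sum] at hg
      have hsub := Finsupp.support_finset_sum (s := b.coeff.support)
        (f := fun f => (single (Xz (-(l0 f)) * f) (b.coeff f)).coeff)
      obtain ⟨f, _, hgf⟩ := Finset.mem_biUnion.mp (hsub hg)
      have := Finsupp.support_single_subset hgf
      rw [Finset.mem_singleton] at this
      rw [this, l0_mul, l0_Xz]
      ring
    choose d M hdM hpush using pushA
    have hpair : ∀ f g : ThompsonF, ∃ N : ℤ, ∀ z : ℤ, N ≤ z → l0 f = 0 →
        cz z f * g = g * cz (z + d g) f := by
      intro f g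
      by_cases hf : l0 f = 0
      · obtain ⟨N, hN⟩ := pairP f g hf (d g) (M g) (hpush g)
        exact ⟨N, fun z hz _ => hN z hz⟩
      · exact ⟨0, fun z _ hf' => absurd hf' hf⟩
    choose NN hNN using hpair
    set T := B.coeff.support with hTdef
    set n : ℤ := 1 + ((T.sup fun g => (d g).natAbs : ℕ) : ℤ)
        + ((T.sup fun f => T.sup fun g => (NN f g).toNat : ℕ) : ℤ) with hndef
    have hnd : ∀ g ∈ T, 1 ≤ n - d g := by
      intro g hg
      have h1 : (d g).natAbs ≤ T.sup fun g => (d g).natAbs :=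
        Finset.le_sup (f := fun g => (d g).natAbs) hg
      have h2 : d g ≤ ((d g).natAbs : ℤ) := Int.le_natAbs
      omega
    have hnN : ∀ f ∈ T, ∀ g ∈ T, NN f g ≤ n - d g := by
      intro f hf g hg
      have h1 : (NN f g).toNat ≤ T.sup fun g' => (NN f g').toNat :=
        Finset.le_sup (f := fun g' => (NN f g').toNat) hg
      have h1' : (T.sup fun g' => (NN f g').toNat)
          ≤ T.sup fun f' => T.sup fun g' => (NN f' g').toNat :=
        Finset.le_sup (f := fun f' => T.sup fun g' => (NN f' g').toNat) hf
      have h2 : d g ≤ ((d g).natAbs : ℤ) := Int.le_natAbs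
      have h3 : (d g).natAbs ≤ T.sup fun g => (d g).natAbs :=
        Finset.le_sup (f := fun g => (d g).natAbs) hg
      have h4 : NN f g ≤ ((NN f g).toNat : ℤ) := Int.self_le_toNat _
      omega
    set Cn : MonoidAlgebra K ThompsonF := ∑ f ∈ T, single (cz n f) (B.coeff f) with hCndef
    have hBsum : B = ∑ g ∈ T, single g (B.coeff g) := finsupp_eq_sum_single B
    have hconj : ∀ m : ℤ, B * single (Xz m) (1:K)
        = single (Xz m) 1 * ∑ f ∈ T, single (cz m f) (B.coeff f) := by
      intro m
      conv_lhs => rw [hBsum]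
      rw [Finset.sum_mul, Finset.mul_sum]
      refine Finset.sum_congr rfl fun f hf => ?_
      rw [single_mul_single, single_mul_single, mul_one, one_mul]
      congr 1
      unfold cz
      rw [show Xz m * (Xz (-m) * f * Xz m) = (Xz m * Xz (-m)) * (f * Xz m) by group,
        Xz_neg_cancel, one_mul]
    have hswap : ∀ g ∈ T, ∀ c : K,
        (∑ f ∈ T, single (cz (n - d g) f) (B.coeff f)) * single g c = single g c * Cn := by
      intro g hg c
      rw [hCndef, Finset.sum_mul, Finset.mul_sum]
      refine Finset.sum_congr rfl fun f hf => ?_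
      rw [single_mul_single, single_mul_single]
      rw [hNN f g (n - d g) (hnN f hf g hg) (hBsupp f hf)]
      have he : n - d g + d g = n := by ring
      rw [he, mul_comm (B.coeff f) c]
    set D : MonoidAlgebra K ThompsonF := ∑ g ∈ T, single (Xz (n - d g) * g) (B.coeff g) with hDdef
    set u₁ : MonoidAlgebra K ThompsonF :=
      ∑ g ∈ T, geom K (n - d g) * (single g (B.coeff g) * Cn) with hu₁def
    have hBv : B * (Cn - D) = (1 - single X0 (1:K)) * u₁ := by
      have hBD : B * D = ∑ g ∈ T, single (Xz (n - d g)) (1:K) * (single g (B.coeff g) * Cn) := by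
        rw [hDdef, Finset.mul_sum]
        refine Finset.sum_congr rfl fun g hg => ?_
        have e1 : single (Xz (n - d g) * g) (B.coeff g)
            = single (Xz (n - d g)) (1:K) * single g (B.coeff g) := by
          rw [single_mul_single, one_mul]
        rw [e1, ← mul_assoc, hconj (n - d g), mul_assoc, hswap g hg (B.coeff g)]
      have hBC : B * Cn = ∑ g ∈ T, single g (B.coeff g) * Cn := by
        conv_lhs => rw [hBsum]
        rw [Finset.sum_mul]
      rw [mul_sub, hBC, hBD, ← Finset.sum_sub_distrib, hu₁def, Finset.mul_sum]
      refine Finset.sum_congr rfl fun g hg => ?_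
      conv_rhs => rw [← mul_assoc, geom_spec, sub_mul, one_mul]
    refine ⟨u₁ + u₀ * (Cn - D), Cn - D, ?_, Or.inr ?_⟩
    · rw [mul_add, ← hBv, ← mul_assoc, ← add_mul, ← hsplit]
    · -- nonvanishing
      have hCc : single (Xz (-n)) (1:K) * B * single (Xz n) 1 = Cn := by
        conv_lhs => rw [hBsum]
        rw [Finset.mul_sum, Finset.sum_mul, hCndef]
        refine Finset.sum_congr rfl fun g hg => ?_
        rw [single_mul_single, single_mul_single, one_mul, mul_one]
        rfl
      have hCn0 : Cn ≠ 0 := by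
        intro h0
        apply hB
        have hBrec : B = single (Xz n) (1:K) * Cn * single (Xz (-n)) 1 := by
          rw [← hCc]
          rw [← mul_assoc, ← mul_assoc, single_mul_single, Xz_neg_cancel, mul_one,
            ← MonoidAlgebra.one_def, one_mul]
          rw [mul_assoc, single_mul_single, Xz_neg_cancel, mul_one,
            ← MonoidAlgebra.one_def, mul_one]
        rw [hBrec, h0, mul_zero, zero_mul]
      obtain ⟨g₀, hg₀mem⟩ := Finsupp.support_nonempty_iff.mpr
        (fun h => hCn0 (coeff_eq_zero.mp h))
      have hg₀ : Cn.coeff g₀ ≠ 0 := Finsupp.mem_support_iff.mp hg₀mem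
      have hg₀l0 : l0 g₀ = 0 := by
        have hsub := Finsupp.support_finset_sum (s := T)
          (f := fun f => (single (cz n f) (B.coeff f)).coeff)
        have hmem' := hg₀mem
        rw [hCndef, coeff_sum] at hmem'
        obtain ⟨f, hfT, hgf⟩ := Finset.mem_biUnion.mp (hsub hmem')
        have := Finsupp.support_single_subset hgf
        rw [Finset.mem_singleton] at this
        rw [this, l0_cz]
        exact hBsupp f hfT
      have hD0 : D.coeff g₀ = 0 := by
        rw [hDdef, coeff_sum, Finsupp.finset_sum_apply]
        apply Finset.sum_eq_zero
        intro g hg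
        have hne : ¬ (Xz (n - d g) * g = g₀) := by
          intro he
          have h2 : l0 (Xz (n - d g) * g) = l0 g₀ := by rw [he]
          rw [l0_mul, l0_Xz, hBsupp g hg, hg₀l0] at h2
          have := hnd g hg
          omega
        rw [coeff_single, Finsupp.single_apply, if_neg hne]
      intro hv0
      apply hg₀
      have h1 : (Cn - D).coeff g₀ = 0 := by rw [hv0]; rfl
      rw [coeff_sub, Finsupp.sub_apply, hD0, sub_zero] at h1
      exact h1

end Stmt9Aux

/-- in `K[F]`, for any `b` the equation `(1 - x_0)u = b v` has a
non-zero solution. -/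
theorem stmt9 (K : Type*) [Field K] (b : MonoidAlgebra K ThompsonF) :
    ∃ u v : MonoidAlgebra K ThompsonF,
      (1 - XF K 0) * u = b * v ∧ (u ≠ 0 ∨ v ≠ 0) := by
  have h : XF K 0 = MonoidAlgebra.single Stmt9Aux.X0 (1:K) := by
    simp only [XF, MonoidAlgebra.of_apply]
    rfl
  rw [h]
  exact Stmt9Aux.main K b
end

section
/- Thompson's monoid M = ⟨x_0, x_1, x_2, ... | x_j x_i = x_i x_{j+1} for 0 ≤ i < j⟩ is cancellative: for all a, b, c ∈ M, if ab = ac then b = c, and if ba = ca then b = c. -/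
/-- Left insertion. -/
def insL : ℕ → List ℕ → List ℕ
  | i, [] => [i]
  | i, a :: t => if a < i then a :: insL (i+1) t else i :: a :: t

/-- Right insertion (on reversed words). -/
def insR : ℕ → List ℕ → List ℕ
  | i, [] => [i]
  | i, b :: t => if i < b then (b+1) :: insR i t else i :: b :: t

lemma insL_swap {i j : ℕ} (h : i < j) (u : List ℕ) :
    insL j (insL i u) = insL i (insL (j+1) u) := by
  induction u generalizing i j with
  | nil =>
    simp only [insL, if_pos h, if_neg (show ¬ (j+1) < i by omega)]
  | cons a t ih =>
    rcases Nat.lt_or_ge a i with ha | ha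
    · simp only [insL, if_pos ha, if_pos (show a < j by omega),
        if_pos (show a < j + 1 by omega)]
      rw [ih (show i + 1 < j + 1 by omega)]
    · rcases Nat.lt_or_ge a (j+1) with haj | haj
      · simp only [insL, if_neg (show ¬ a < i by omega), if_pos h, if_pos haj,
          if_neg (show ¬ a < i by omega)]
      · simp only [insL, if_neg (show ¬ a < i by omega), if_pos h,
          if_neg (show ¬ a < j + 1 by omega), if_neg (show ¬ (j+1) < i by omega)]

lemma insR_swap {i j : ℕ} (h : i < j) (u : List ℕ) :
    insR i (insR j u) = insR (j+1) (insR i u) := by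
  induction u generalizing i j with
  | nil =>
    simp only [insR, if_pos h, if_neg (show ¬ (j+1) < i by omega)]
  | cons b t ih =>
    rcases Nat.lt_or_ge j b with hb | hb
    · simp only [insR, if_pos hb, if_pos (show i < b by omega),
        if_pos (show i < b + 1 by omega), if_pos (show j + 1 < b + 1 by omega)]
      rw [ih h]
    · rcases Nat.lt_or_ge i b with hib | hib
      · simp only [insR, if_neg (show ¬ j < b by omega), if_pos h, if_pos hib,
          if_neg (show ¬ j + 1 < b + 1 by omega)]
      · simp only [insR, if_neg (show ¬ j < b by omega), if_pos h,
          if_neg (show ¬ i < b by omega), if_neg (show ¬ (j+1) < i by omega)]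

lemma insL_length (i : ℕ) (u : List ℕ) : (insL i u).length = u.length + 1 := by
  induction u generalizing i with
  | nil => rfl
  | cons a t ih => simp only [insL]; split <;> simp [ih]

lemma insR_length (i : ℕ) (u : List ℕ) : (insR i u).length = u.length + 1 := by
  induction u generalizing i with
  | nil => rfl
  | cons a t ih => simp only [insR]; split <;> simp [ih]

lemma insL_inj : ∀ (u : List ℕ) (i : ℕ) (v : List ℕ), insL i u = insL i v → u = v := by
  intro u
  induction u with
  | nil =>
    intro i v h
    cases v with
    | nil => rfl
    | cons b t => exfalso; have := congrArg List.length h; simp [insL_length] at this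
  | cons a s ih =>
    intro i v h
    cases v with
    | nil => exfalso; have := congrArg List.length h; simp [insL_length] at this
    | cons b t =>
      simp only [insL] at h
      by_cases ha : a < i <;> by_cases hb : b < i
      · rw [if_pos ha, if_pos hb] at h
        injection h with h1 h2
        rw [h1, ih (i+1) t h2]
      · rw [if_pos ha, if_neg hb] at h
        injection h with h1 h2
        omega
      · rw [if_neg ha, if_pos hb] at h
        injection h with h1 h2
        omega
      · rw [if_neg ha, if_neg hb] at h
        injection h

lemma insR_inj : ∀ (u : List ℕ) (i : ℕ) (v : List ℕ), insR i u = insR i v → u = v := by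
  intro u
  induction u with
  | nil =>
    intro i v h
    cases v with
    | nil => rfl
    | cons b t => exfalso; have := congrArg List.length h; simp [insR_length] at this
  | cons a s ih =>
    intro i v h
    cases v with
    | nil => exfalso; have := congrArg List.length h; simp [insR_length] at this
    | cons b t =>
      simp only [insR] at h
      by_cases ha : i < a <;> by_cases hb : i < b
      · rw [if_pos ha, if_pos hb] at h
        injection h with h1 h2
        have hab : a = b := by omega
        rw [hab, ih i t h2]
      · rw [if_pos ha, if_neg hb] at h
        injection h with h1 h2
        omega
      · rw [if_neg ha, if_pos hb] at h
        injection h with h1 h2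
        omega
      · rw [if_neg ha, if_neg hb] at h
        injection h

/-- `insL i` as an element of `Function.End`. -/
def insLE (i : ℕ) : Function.End (List ℕ) := insL i

/-- `insR i` as an element of `Function.End`. -/
def insRE (i : ℕ) : Function.End (List ℕ) := insR i

def HL : FreeMonoid ℕ →* Function.End (List ℕ) := FreeMonoid.lift insLE

def HR : FreeMonoid ℕ →* (Function.End (List ℕ))ᵐᵒᵖ :=
  FreeMonoid.lift (fun i => MulOpposite.op (insRE i))

lemma HL_ker : thompsonCon ≤ Con.ker HL := by
  apply Con.conGen_le.2
  rintro x y ⟨i, j, hij, rfl, rfl⟩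
  simp only [Con.ker_rel, map_mul, FreeMonoid.lift_eval_of]
  funext u
  exact insL_swap hij u

lemma HR_ker : thompsonCon ≤ Con.ker HR := by
  apply Con.conGen_le.2
  rintro x y ⟨i, j, hij, rfl, rfl⟩
  simp only [Con.ker_rel, map_mul, HR, FreeMonoid.lift_eval_of]
  rw [← MulOpposite.op_mul, ← MulOpposite.op_mul]
  congr 1
  funext u
  exact insR_swap hij u

lemma HL_eval (w u : List ℕ) : HL (FreeMonoid.ofList w) u = w.foldr insL u := by
  induction w with
  | nil => rfl
  | cons a t ih =>
    rw [FreeMonoid.ofList_cons, map_mul]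
    show insL a (HL (FreeMonoid.ofList t) u) = _
    rw [ih]
    rfl

lemma HR_eval (w u : List ℕ) :
    (HR (FreeMonoid.ofList w)).unop u = w.foldl (fun v i => insR i v) u := by
  induction w generalizing u with
  | nil => rfl
  | cons a t ih =>
    rw [FreeMonoid.ofList_cons, map_mul, MulOpposite.unop_mul]
    show (HR (FreeMonoid.ofList t)).unop (insR a u) = _
    rw [ih]
    rfl

def nfL (w : List ℕ) : List ℕ := w.foldr insL []
def nfR (w : List ℕ) : List ℕ := w.foldl (fun v i => insR i v) []

lemma con_of {x y : FreeMonoid ℕ} (h : thompsonRel x y) : thompsonCon x y :=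
  ConGen.Rel.of x y h

lemma con_insL (i : ℕ) (u : List ℕ) :
    thompsonCon (FreeMonoid.of i * FreeMonoid.ofList u) (FreeMonoid.ofList (insL i u)) := by
  induction u generalizing i with
  | nil => exact thompsonCon.refl _
  | cons a t ih =>
    rcases Nat.lt_or_ge a i with ha | ha
    · have h1 : thompsonCon (FreeMonoid.of i * FreeMonoid.of a)
          (FreeMonoid.of a * FreeMonoid.of (i+1)) := con_of ⟨a, i, ha, rfl, rfl⟩
      have h2 := h1.mul (thompsonCon.refl (FreeMonoid.ofList t))
      have h3 := (thompsonCon.refl (FreeMonoid.of a)).mul (ih (i+1))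
      have e : insL i (a :: t) = a :: insL (i+1) t := by rw [insL, if_pos ha]
      rw [e]
      exact h2.trans h3
    · have e : insL i (a :: t) = i :: a :: t := by rw [insL, if_neg (by omega)]
      rw [e]
      exact thompsonCon.refl _

lemma con_nfL (w : List ℕ) :
    thompsonCon (FreeMonoid.ofList w) (FreeMonoid.ofList (nfL w)) := by
  induction w with
  | nil => exact thompsonCon.refl _
  | cons a t ih =>
    exact ((thompsonCon.refl (FreeMonoid.of a)).mul ih).trans (con_insL a (nfL t))

lemma con_insR (i : ℕ) (u : List ℕ) :
    thompsonCon (FreeMonoid.ofList u.reverse * FreeMonoid.of i)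
      (FreeMonoid.ofList (insR i u).reverse) := by
  induction u generalizing i with
  | nil => exact thompsonCon.refl _
  | cons b t ih =>
    rcases Nat.lt_or_ge i b with hib | hib
    · have e : insR i (b :: t) = (b+1) :: insR i t := by rw [insR, if_pos hib]
      rw [e]
      have h1 : thompsonCon (FreeMonoid.of b * FreeMonoid.of i)
          (FreeMonoid.of i * FreeMonoid.of (b+1)) := con_of ⟨i, b, hib, rfl, rfl⟩
      have h2 := (thompsonCon.refl (FreeMonoid.ofList t.reverse)).mul h1
      have h3 := (ih i).mul (thompsonCon.refl (FreeMonoid.of (b+1)))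
      have e1 : FreeMonoid.ofList (b :: t).reverse * FreeMonoid.of i
          = FreeMonoid.ofList t.reverse * (FreeMonoid.of b * FreeMonoid.of i) := by
        rw [List.reverse_cons, FreeMonoid.ofList_append, mul_assoc]
        rfl
      have e2 : FreeMonoid.ofList ((b+1) :: insR i t).reverse
          = FreeMonoid.ofList (insR i t).reverse * FreeMonoid.of (b+1) := by
        rw [List.reverse_cons, FreeMonoid.ofList_append]
        rfl
      rw [e1, e2]
      refine h2.trans ?_
      rw [← mul_assoc]
      exact h3
    · have e : insR i (b :: t) = i :: b :: t := by rw [insR, if_neg (by omega)]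
      rw [e]
      have e1 : FreeMonoid.ofList (i :: b :: t).reverse
          = FreeMonoid.ofList (b :: t).reverse * FreeMonoid.of i := by
        rw [List.reverse_cons, FreeMonoid.ofList_append]
        rfl
      rw [e1]
      exact thompsonCon.refl _

lemma con_foldR (w u : List ℕ) :
    thompsonCon (FreeMonoid.ofList u.reverse * FreeMonoid.ofList w)
      (FreeMonoid.ofList ((w.foldl (fun v i => insR i v) u).reverse)) := by
  induction w generalizing u with
  | nil =>
    rw [FreeMonoid.ofList_nil, mul_one]
    exact thompsonCon.refl _
  | cons a t ih =>
    have e1 : FreeMonoid.ofList u.reverse * FreeMonoid.ofList (a :: t)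
        = (FreeMonoid.ofList u.reverse * FreeMonoid.of a) * FreeMonoid.ofList t := by
      rw [FreeMonoid.ofList_cons, mul_assoc]
    rw [e1]
    have h1 := (con_insR a u).mul (thompsonCon.refl (FreeMonoid.ofList t))
    exact h1.trans (ih (insR a u))

lemma con_nfR (w : List ℕ) :
    thompsonCon (FreeMonoid.ofList w) (FreeMonoid.ofList (nfR w).reverse) := by
  have := con_foldR w []
  rwa [List.reverse_nil, FreeMonoid.ofList_nil, one_mul] at this

lemma foldr_insL_inj (w : List ℕ) :
    Function.Injective (fun u : List ℕ => w.foldr insL u) := by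
  induction w with
  | nil => exact fun u v h => h
  | cons a t ih => exact fun u v h => ih (insL_inj _ a _ h)

lemma foldl_insR_inj (w : List ℕ) :
    Function.Injective (fun u : List ℕ => w.foldl (fun v i => insR i v) u) := by
  induction w with
  | nil => exact fun u v h => h
  | cons a t ih =>
    intro u v h
    exact insR_inj _ a _ (ih h)

/-- Thompson's monoid is cancellative. -/
theorem stmt19 (a b c : ThompsonM) :
    (a * b = a * c → b = c) ∧ (b * a = c * a → b = c) := by
  obtain ⟨A, rfl⟩ := Con.mk'_surjective a
  obtain ⟨B, rfl⟩ := Con.mk'_surjective b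
  obtain ⟨C, rfl⟩ := Con.mk'_surjective c
  constructor
  · intro h
    rw [← map_mul, ← map_mul] at h
    have hcon : thompsonCon (A * B) (A * C) := Con.eq _ |>.1 h
    have hker : HL (A * B) = HL (A * C) := (Con.ker_rel _).1 (HL_ker hcon)
    rw [map_mul, map_mul] at hker
    have h0 : HL A (HL B []) = HL A (HL C []) := congrFun hker []
    have hA : Function.Injective (HL A : List ℕ → List ℕ) := by
      have : (HL A : List ℕ → List ℕ) = fun u => A.toList.foldr insL u := by
        funext u
        rw [← HL_eval A.toList u, FreeMonoid.ofList_toList]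
      rw [this]
      exact foldr_insL_inj _
    have hBC : HL B [] = HL C [] := hA h0
    have eB : HL B [] = nfL B.toList := HL_eval B.toList []
    have eC : HL C [] = nfL C.toList := HL_eval C.toList []
    have hnf : nfL B.toList = nfL C.toList := by rw [← eB, ← eC, hBC]
    have cB : thompsonCon B (FreeMonoid.ofList (nfL B.toList)) := con_nfL B.toList
    have cC : thompsonCon C (FreeMonoid.ofList (nfL C.toList)) := con_nfL C.toList
    exact Con.eq _ |>.2 (cB.trans (hnf ▸ cC.symm))
  · intro h
    rw [← map_mul, ← map_mul] at h
    have hcon : thompsonCon (B * A) (C * A) := Con.eq _ |>.1 h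
    have hker : HR (B * A) = HR (C * A) := (Con.ker_rel _).1 (HR_ker hcon)
    rw [map_mul, map_mul] at hker
    have hker' : (HR A).unop * (HR B).unop = (HR A).unop * (HR C).unop := by
      have := congrArg MulOpposite.unop hker
      rwa [MulOpposite.unop_mul, MulOpposite.unop_mul] at this
    have h0 : (HR A).unop ((HR B).unop []) = (HR A).unop ((HR C).unop []) :=
      congrFun hker' []
    have hA : Function.Injective ((HR A).unop : List ℕ → List ℕ) := by
      have : ((HR A).unop : List ℕ → List ℕ)
          = fun u => A.toList.foldl (fun v i => insR i v) u := by
        funext u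
        rw [← HR_eval A.toList u, FreeMonoid.ofList_toList]
      rw [this]
      exact foldl_insR_inj _
    have hBC : (HR B).unop [] = (HR C).unop [] := hA h0
    have eB : (HR B).unop [] = nfR B.toList := HR_eval B.toList []
    have eC : (HR C).unop [] = nfR C.toList := HR_eval C.toList []
    have hnf : nfR B.toList = nfR C.toList := by rw [← eB, ← eC, hBC]
    have cB : thompsonCon B (FreeMonoid.ofList (nfR B.toList).reverse) := con_nfR B.toList
    have cC : thompsonCon C (FreeMonoid.ofList (nfR C.toList).reverse) := con_nfR C.toList
    exact Con.eq _ |>.2 (cB.trans (hnf ▸ cC.symm))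
end
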